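/- Let d₁, d₂ ≥ 2 be integers and let L = L_{d₁d₂} be the associated 5×5 real matrix. Then for every integer k ≥ 1, the matrix kI − L is invertible, and the operator norm of (kI − L)⁻¹ (with respect to the Euclidean norm on ℝ⁵) is at most 5/(4k). -/

import Mathlib

open Matrix

lemma clm_diag_norm_le {n : ℕ} (d : Fin n → ℝ) (C : ℝ) (hC : 0 ≤ C)
    (h : ∀ i, |d i| ≤ C) :
    ‖Matrix.toEuclideanCLM (𝕜 := ℝ) (Matrix.diagonal d)‖ ≤ C := by
  apply ContinuousLinearMap.opNorm_le_bound _ hC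
  intro x
  rw [EuclideanSpace.norm_eq, EuclideanSpace.norm_eq]
  have hx : ∀ i, (toEuclideanCLM (𝕜 := ℝ) (diagonal d) x) i = d i * x i := by
    intro i
    have := congrFun (ofLp_toEuclideanCLM (diagonal d) x) i
    simpa [Matrix.toLin'_apply, Matrix.mulVec_diagonal] using this
  rw [← Real.sqrt_sq hC, ← Real.sqrt_mul (by positivity)]
  apply Real.sqrt_le_sqrt
  rw [Finset.mul_sum]
  apply Finset.sum_le_sum
  intro i _
  rw [hx i]
  have h1 := h i
  have := abs_nonneg (x i)
  rw [Real.norm_eq_abs, Real.norm_eq_abs, abs_mul, mul_pow]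
  have : |d i| ^ 2 ≤ C ^ 2 := pow_le_pow_left₀ (abs_nonneg _) h1 2
  nlinarith [sq_nonneg (x i), sq_abs (x i)]

lemma clm_single_norm_le {n : ℕ} [NeZero n] (i j : Fin n) (c : ℝ) :
    ‖Matrix.toEuclideanCLM (𝕜 := ℝ) (Matrix.single i j c)‖ ≤ |c| := by
  apply ContinuousLinearMap.opNorm_le_bound _ (abs_nonneg c)
  intro x
  have hx : ∀ l, (toEuclideanCLM (𝕜 := ℝ) (single i j c) x) l
      = if l = i then c * x j else 0 := by
    intro l
    have := congrFun (ofLp_toEuclideanCLM (single i j c) x) l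
    rw [this]
    simp [Matrix.mulVec, dotProduct, Matrix.single, ite_and, eq_comm]
  have hxj : |x j| ≤ ‖x‖ := by
    rw [EuclideanSpace.norm_eq]
    rw [← Real.sqrt_sq_eq_abs]
    apply Real.sqrt_le_sqrt
    have := Finset.single_le_sum (f := fun l => ‖x l‖ ^ 2) (fun l _ => by positivity)
      (Finset.mem_univ j)
    simpa [Real.norm_eq_abs, sq_abs] using this
  calc ‖toEuclideanCLM (𝕜 := ℝ) (single i j c) x‖
      = |c| * |x j| := by
        rw [EuclideanSpace.norm_eq]
        have : ∀ l, ‖(toEuclideanCLM (𝕜 := ℝ) (single i j c) x) l‖ ^ 2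
            = if l = i then (c * x j)^2 else 0 := by
          intro l; rw [hx l]; split <;> simp [Real.norm_eq_abs, ← abs_mul, sq_abs]

        rw [Finset.sum_congr rfl (fun l _ => this l), Finset.sum_ite_eq' Finset.univ i]
        simp only [Finset.mem_univ, if_true]
        rw [Real.sqrt_sq_eq_abs, abs_mul]
    _ ≤ |c| * ‖x‖ := by gcongr


noncomputable section

/-- The 5×5 matrix `L_{d₁d₂}`: zero except `(L)₂₂ = −d₂`, `(L)₃₂ = 2`, `(L)₃₃ = −2`
(rows and columns indexed 1,…,5; here indexed `0,…,4`). -/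
def Lmat (d₁ d₂ : ℕ) : Matrix (Fin 5) (Fin 5) ℝ :=
  Matrix.of fun i j =>
    if i = 1 ∧ j = 1 then -(d₂ : ℝ)
    else if i = 2 ∧ j = 1 then 2
    else if i = 2 ∧ j = 2 then -2
    else 0

/-- For every integer `k ≥ 1`, the matrix `k I − L_{d₁d₂}` is invertible and the operator norm
(w.r.t. the Euclidean norm on `ℝ⁵`) of its inverse is at most `5/(4k)`. -/
theorem Lmat_resolvent_bound (d₁ d₂ : ℕ) (hd₁ : 2 ≤ d₁) (hd₂ : 2 ≤ d₂)
    (k : ℕ) (hk : 1 ≤ k) :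
    IsUnit ((k : ℝ) • (1 : Matrix (Fin 5) (Fin 5) ℝ) - Lmat d₁ d₂) ∧
      ‖Matrix.toEuclideanCLM (𝕜 := ℝ)
        (((k : ℝ) • (1 : Matrix (Fin 5) (Fin 5) ℝ) - Lmat d₁ d₂)⁻¹)‖ ≤ 5 / (4 * k) := by
  have hk1 : (1:ℝ) ≤ (k:ℝ) := by exact_mod_cast hk
  have hd2 : (2:ℝ) ≤ (d₂:ℝ) := by exact_mod_cast hd₂
  have hkpos : (0:ℝ) < (k:ℝ) := by linarith
  set kr := (k:ℝ) with hkr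
  have e0 : 0 < kr + (d₂:ℝ) := by linarith
  have e2 : 0 < kr + 2 := by linarith
  set A := (kr • (1 : Matrix (Fin 5) (Fin 5) ℝ) - Lmat d₁ d₂) with hA
  set dvec : Fin 5 → ℝ := ![1/kr, 1/(kr+(d₂:ℝ)), 1/(kr+2), 1/kr, 1/kr] with hdvec
  set c := 2/((kr+(d₂:ℝ))*(kr+2)) with hc
  set M := Matrix.diagonal dvec + Matrix.single 2 1 c with hM
  have hAM : A * M = 1 := by
    ext i j
    fin_cases i <;> fin_cases j <;>
      simp [hA, hM, Lmat, Matrix.mul_apply, Fin.sum_univ_five, Matrix.diagonal,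
        Matrix.single, Matrix.one_apply, hdvec, hc, Matrix.sub_apply,
        Matrix.smul_apply, Matrix.add_apply, Matrix.of_apply] <;>
      field_simp <;> ring
  have hMA : M * A = 1 := by
    ext i j
    fin_cases i <;> fin_cases j <;>
      simp [hA, hM, Lmat, Matrix.mul_apply, Fin.sum_univ_five, Matrix.diagonal,
        Matrix.single, Matrix.one_apply, hdvec, hc, Matrix.sub_apply,
        Matrix.smul_apply, Matrix.add_apply, Matrix.of_apply] <;>
      field_simp <;> ring
  refine ⟨⟨⟨A, M, hAM, hMA⟩, rfl⟩, ?_⟩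
  rw [Matrix.inv_eq_right_inv hAM, hM, map_add]
  have hdb : ∀ i, |dvec i| ≤ 1 / kr := by
    intro i
    have h3 : dvec i = 1/kr ∨ dvec i = 1/(kr+(d₂:ℝ)) ∨ dvec i = 1/(kr+2) := by
      fin_cases i <;> simp [hdvec]
    rcases h3 with h | h | h <;>
      rw [h, abs_of_pos (by positivity)] <;>
      exact one_div_le_one_div_of_le hkpos (by linarith)
  have hcb : |c| ≤ 1 / (4 * kr) := by
    rw [hc, abs_of_pos (by positivity), div_le_div_iff₀ (by positivity) (by positivity)]
    nlinarith [sq_nonneg (kr - 2)]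
  calc ‖Matrix.toEuclideanCLM (𝕜 := ℝ) (Matrix.diagonal dvec)
          + Matrix.toEuclideanCLM (𝕜 := ℝ) (Matrix.single (2 : Fin 5) (1 : Fin 5) c)‖
      ≤ ‖Matrix.toEuclideanCLM (𝕜 := ℝ) (Matrix.diagonal dvec)‖
          + ‖Matrix.toEuclideanCLM (𝕜 := ℝ) (Matrix.single (2 : Fin 5) (1 : Fin 5) c)‖ :=
        norm_add_le _ _
    _ ≤ 1 / kr + 1 / (4 * kr) := by
        refine add_le_add (clm_diag_norm_le dvec (1/kr) (by positivity) hdb) ?_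
        exact le_trans (clm_single_norm_le 2 1 c) hcb
    _ = 5 / (4 * kr) := by field_simp; ring
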